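/- arXiv:1303.4956 — 3 statements merged into one kernel-verified Lean document; each statement's English description precedes it below -/
import Mathlib

section
/- Let H be a real n×m matrix of rank m, let R_x and R_n be positive definite m×m and n×n matrices respectively, let ε > 0, and let R_y = H R_x Hᵀ + ε R_n. Then (Hᵀ R_y⁻¹ H)⁻¹ = ε (Hᵀ R_n⁻¹ H)⁻¹ + R_x. -/
open Matrix

lemma mulVec_inj_of_rank {n m : ℕ} (H : Matrix (Fin n) (Fin m) ℝ) (hH : H.rank = m) :
    Function.Injective H.mulVec := by
  have hker : LinearMap.ker H.mulVecLin = ⊥ := by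
    have h1 := LinearMap.finrank_range_add_finrank_ker H.mulVecLin
    rw [Matrix.rank] at hH
    rw [hH] at h1
    simp only [Module.finrank_fintype_fun_eq_card, Fintype.card_fin] at h1
    exact Submodule.finrank_eq_zero.mp (by omega)
  have hi := LinearMap.ker_eq_bot.mp hker
  intro x y hxy
  exact hi (by simpa [Matrix.mulVecLin_apply] using hxy)

lemma posdef_conj {n m : ℕ} (H : Matrix (Fin n) (Fin m) ℝ) (hH : H.rank = m)
    {M : Matrix (Fin n) (Fin n) ℝ} (hM : M.PosDef) : (Hᵀ * M * H).PosDef := by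
  have hinj := mulVec_inj_of_rank H hH
  refine Matrix.PosDef.of_dotProduct_mulVec_pos ?_ ?_
  · have h : Hᴴ = Hᵀ := Matrix.conjTranspose_eq_transpose_of_trivial H
    rw [← h]
    exact Matrix.isHermitian_conjTranspose_mul_mul H hM.isHermitian
  · intro x hx
    have hHx : H.mulVec x ≠ 0 := fun h => hx (by simpa using hinj (h.trans (Matrix.mulVec_zero H).symm))
    have := hM.dotProduct_mulVec_pos hHx
    simpa [Matrix.dotProduct_mulVec, ← Matrix.vecMul_vecMul, Matrix.vecMul_transpose] using this

theorem stmt0 {n m : ℕ} (H : Matrix (Fin n) (Fin m) ℝ)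
    (Rx : Matrix (Fin m) (Fin m) ℝ) (Rn Ry : Matrix (Fin n) (Fin n) ℝ)
    (hH : H.rank = m) (hRx : Rx.PosDef) (hRn : Rn.PosDef)
    (ε : ℝ) (hε : 0 < ε) (hRy : Ry = H * Rx * Hᵀ + ε • Rn) :
    (Hᵀ * Ry⁻¹ * H)⁻¹ = ε • (Hᵀ * Rn⁻¹ * H)⁻¹ + Rx := by
  have hεRn : (ε • Rn).PosDef := by
    refine Matrix.PosDef.of_dotProduct_mulVec_pos ?_ ?_
    · show (ε • Rn)ᴴ = ε • Rn
      have h : Rnᵀ = Rn := by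
        rw [← Matrix.conjTranspose_eq_transpose_of_trivial]; exact hRn.isHermitian.eq
      simp [h]
    · intro x hx
      have := hRn.dotProduct_mulVec_pos hx
      simpa [Matrix.smul_mulVec] using mul_pos hε this
  have hRyPD : Ry.PosDef := by
    rw [hRy]
    refine Matrix.PosDef.posSemidef_add ?_ hεRn
    have h := hRx.posSemidef.mul_mul_conjTranspose_same H
    rwa [Matrix.conjTranspose_eq_transpose_of_trivial] at h
  have hS : (Hᵀ * Rn⁻¹ * H).PosDef := posdef_conj H hH hRn.inv
  set S := Hᵀ * Rn⁻¹ * H with hSdef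
  set B := Hᵀ * Ry⁻¹ * H with hBdef
  have hRydet : IsUnit Ry.det := (Matrix.isUnit_iff_isUnit_det _).mp hRyPD.isUnit
  have hRndet : IsUnit Rn.det := (Matrix.isUnit_iff_isUnit_det _).mp hRn.isUnit
  have hSdet : IsUnit S.det := (Matrix.isUnit_iff_isUnit_det _).mp hS.isUnit
  have key : Hᵀ * Ry⁻¹ * Ry = Hᵀ := by
    rw [Matrix.mul_assoc, Matrix.nonsing_inv_mul _ hRydet, Matrix.mul_one]
  have h2 : Hᵀ * Ry⁻¹ * (H * Rx * Hᵀ + ε • Rn) * (Rn⁻¹ * H) = Hᵀ * (Rn⁻¹ * H) := by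
    rw [← hRy, key]
  simp only [Matrix.mul_add, Matrix.add_mul, Matrix.mul_smul, Matrix.smul_mul,
    Matrix.mul_assoc, Matrix.mul_nonsing_inv_cancel_left _ _ hRndet] at h2
  -- h2 : Hᵀ * (Ry⁻¹ * (H * (Rx * (Hᵀ * (Rn⁻¹ * H))))) + ε • (Hᵀ * (Ry⁻¹ * H)) = Hᵀ * (Rn⁻¹ * H)
  have eq1 : B * (Rx * S) + ε • B = S := by
    simpa [hSdef, hBdef, Matrix.mul_assoc] using h2
  have hSS : S * S⁻¹ = 1 := Matrix.mul_nonsing_inv _ hSdet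
  have eq1' : B * (Rx * S) = S - ε • B := eq_sub_of_add_eq eq1
  have eq2 : B * Rx = 1 - ε • (B * S⁻¹) := by
    calc B * Rx = B * (Rx * S) * S⁻¹ := by
          rw [Matrix.mul_assoc B (Rx * S) S⁻¹, Matrix.mul_assoc Rx S S⁻¹, hSS,
            Matrix.mul_one]
      _ = (S - ε • B) * S⁻¹ := by rw [eq1']
      _ = 1 - ε • (B * S⁻¹) := by
          rw [Matrix.sub_mul, hSS, Matrix.smul_mul]
  have hright : B * (ε • S⁻¹ + Rx) = 1 := by
    rw [Matrix.mul_add, Matrix.mul_smul, eq2]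
    abel
  exact Matrix.inv_eq_right_inv hright
end

section
/- Under the same assumptions, the matrix K := (Hᵀ R_y⁻¹ H)⁻¹ − 2 R_x equals ε (Hᵀ R_n⁻¹ H)⁻¹ − R_x. -/
open Matrix

lemma posDef_smul' {k : ℕ} {ε : ℝ} (hε : 0 < ε) {M : Matrix (Fin k) (Fin k) ℝ}
    (hM : M.PosDef) : (ε • M).PosDef := by
  refine Matrix.PosDef.of_dotProduct_mulVec_pos ?_ (fun x hx => ?_)
  · unfold Matrix.IsHermitian
    rw [conjTranspose_smul, hM.1]
    simp
  · rw [smul_mulVec, dotProduct_smul, smul_eq_mul]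
    exact mul_pos hε (hM.dotProduct_mulVec_pos hx)

lemma mulVec_ne {n m : ℕ} (H : Matrix (Fin n) (Fin m) ℝ) (hH : H.rank = m)
    {x : Fin m → ℝ} (hx : x ≠ 0) : H *ᵥ x ≠ 0 := by
  have hker : LinearMap.ker H.mulVecLin = ⊥ := by
    have h1 := LinearMap.finrank_range_add_finrank_ker H.mulVecLin
    rw [Matrix.rank] at hH
    rw [hH, Module.finrank_pi] at h1
    simp only [Fintype.card_fin] at h1
    have : Module.finrank ℝ (LinearMap.ker H.mulVecLin) = 0 := by omega
    exact Submodule.finrank_eq_zero.mp this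
  intro h
  exact hx (by simpa [hker] using LinearMap.mem_ker.mpr (show H.mulVecLin x = 0 from h))

theorem stmt2 {n m : ℕ} (H : Matrix (Fin n) (Fin m) ℝ)
    (Rx : Matrix (Fin m) (Fin m) ℝ) (Rn Ry : Matrix (Fin n) (Fin n) ℝ)
    (hH : H.rank = m) (hRx : Rx.PosDef) (hRn : Rn.PosDef)
    (ε : ℝ) (hε : 0 < ε) (hRy : Ry = H * Rx * Hᵀ + ε • Rn)
    (K : Matrix (Fin m) (Fin m) ℝ)
    (hK : K = (Hᵀ * Ry⁻¹ * H)⁻¹ - (2 : ℝ) • Rx) :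
    K = ε • (Hᵀ * Rn⁻¹ * H)⁻¹ - Rx := by
  set A := Hᵀ * Rn⁻¹ * H with hA_def
  have hHt : Hᵀ = Hᴴ := (conjTranspose_eq_transpose_of_trivial H).symm
  -- A is positive definite
  have hA : A.PosDef := by
    refine Matrix.PosDef.of_dotProduct_mulVec_pos ?_ (fun x hx => ?_)
    · rw [hA_def, hHt]
      exact isHermitian_conjTranspose_mul_mul H hRn.inv.1
    · have h1 : star x ⬝ᵥ (Hᴴ * Rn⁻¹ * H) *ᵥ x
          = star (H *ᵥ x) ⬝ᵥ Rn⁻¹ *ᵥ (H *ᵥ x) := by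
        simp only [star_mulVec, dotProduct_mulVec, vecMul_vecMul]
      rw [hA_def, hHt, h1]
      exact hRn.inv.dotProduct_mulVec_pos (mulVec_ne H hH hx)
  -- Ry is positive definite
  have hRyPD : Ry.PosDef := by
    rw [hRy]
    have h1 : (H * Rx * Hᴴ).PosSemidef := hRx.posSemidef.mul_mul_conjTranspose_same H
    rw [hHt]
    exact Matrix.PosDef.posSemidef_add h1 (posDef_smul' hε hRn)
  set B := A + ε • Rx⁻¹ with hB_def
  have hB : B.PosDef := hA.add (posDef_smul' hε hRx.inv)
  -- invertibility facts
  have hRxd : IsUnit Rx.det := (Matrix.isUnit_iff_isUnit_det _).mp hRx.isUnit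
  have hRnd : IsUnit Rn.det := (Matrix.isUnit_iff_isUnit_det _).mp hRn.isUnit
  have hRyd : IsUnit Ry.det := (Matrix.isUnit_iff_isUnit_det _).mp hRyPD.isUnit
  have hAd : IsUnit A.det := (Matrix.isUnit_iff_isUnit_det _).mp hA.isUnit
  have hBd : IsUnit B.det := (Matrix.isUnit_iff_isUnit_det _).mp hB.isUnit
  have hRnInv : Rn * Rn⁻¹ = 1 := mul_nonsing_inv Rn hRnd
  have hRxInv : Rx * Rx⁻¹ = 1 := mul_nonsing_inv Rx hRxd
  have hRxInv' : Rx⁻¹ * Rx = 1 := nonsing_inv_mul Rx hRxd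
  have hRyInv' : Ry⁻¹ * Ry = 1 := nonsing_inv_mul Ry hRyd
  have hAInv : A * A⁻¹ = 1 := mul_nonsing_inv A hAd
  have hBInv : B * B⁻¹ = 1 := mul_nonsing_inv B hBd
  have hBInv' : B⁻¹ * B = 1 := nonsing_inv_mul B hBd
  -- key identity: Ry * (Rn⁻¹ * H) = H * Rx * B
  have key : Ry * (Rn⁻¹ * H) = H * Rx * B := by
    rw [hRy, hB_def, hA_def, Matrix.add_mul, Matrix.mul_add, Matrix.smul_mul,
      Matrix.mul_smul, ← Matrix.mul_assoc Rn Rn⁻¹ H, hRnInv, Matrix.one_mul,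
      Matrix.mul_assoc H Rx Rx⁻¹, hRxInv, Matrix.mul_one]
    simp only [Matrix.mul_assoc]
  -- hence Ry⁻¹ * H = Rn⁻¹ * H * B⁻¹ * Rx⁻¹
  have step : Ry⁻¹ * H = Rn⁻¹ * H * B⁻¹ * Rx⁻¹ := by
    have h1 : Rn⁻¹ * H = Ry⁻¹ * (H * Rx * B) := by
      rw [← key, ← Matrix.mul_assoc, hRyInv', Matrix.one_mul]
    rw [h1, Matrix.mul_assoc Ry⁻¹ (H * Rx * B) B⁻¹, Matrix.mul_assoc (H * Rx) B B⁻¹,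
      hBInv, Matrix.mul_one, Matrix.mul_assoc Ry⁻¹ (H * Rx) Rx⁻¹,
      Matrix.mul_assoc H Rx Rx⁻¹, hRxInv, Matrix.mul_one]
  -- hence Hᵀ * Ry⁻¹ * H = A * B⁻¹ * Rx⁻¹
  have main : Hᵀ * Ry⁻¹ * H = A * B⁻¹ * Rx⁻¹ := by
    rw [Matrix.mul_assoc Hᵀ Ry⁻¹ H, step, hA_def]
    simp only [Matrix.mul_assoc]
  -- invert
  have inv_main : (Hᵀ * Ry⁻¹ * H)⁻¹ = Rx * B * A⁻¹ := by
    rw [main]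
    apply inv_eq_right_inv
    have h2 : A * B⁻¹ * Rx⁻¹ * (Rx * B * A⁻¹)
        = A * (B⁻¹ * ((Rx⁻¹ * Rx) * (B * A⁻¹))) := by noncomm_ring
    rw [h2, hRxInv', one_mul, ← mul_assoc B⁻¹ B A⁻¹, hBInv', one_mul, hAInv]
  have expand : Rx * B * A⁻¹ = Rx + ε • A⁻¹ := by
    have h3 : Rx * B * A⁻¹ = Rx * (A * A⁻¹) + ε • ((Rx * Rx⁻¹) * A⁻¹) := by
      rw [hB_def]; noncomm_ring
    rw [h3, hAInv, hRxInv, mul_one, one_mul]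
  rw [hK, inv_main, expand]
  module
end

section
/- With the notation above, if υ_r γ_m > ε > υ_{r+1} γ₁ for some 1 ≤ r < m, then δ_r < 0 and δ_{r+1} > 0; consequently r = max{ s : δ_s < 0 }. -/
open Matrix

lemma quad_diag {m : ℕ} (M : Matrix (Fin m) (Fin m) ℝ) (hM : M * Mᵀ = 1)
    (d x : Fin m → ℝ) :
    x ⬝ᵥ ((M * diagonal d * Mᵀ) *ᵥ x) = ∑ i, d i * (Mᵀ *ᵥ x) i ^ 2 := by
  have h1 : (M * diagonal d * Mᵀ) *ᵥ x = M *ᵥ (diagonal d *ᵥ (Mᵀ *ᵥ x)) := by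
    simp [Matrix.mulVec_mulVec, Matrix.mul_assoc]
  rw [h1, Matrix.dotProduct_mulVec, ← Matrix.mulVec_transpose]
  simp [Matrix.mulVec_diagonal, Finset.mul_sum, dotProduct]
  exact Finset.sum_congr rfl fun i _ => by ring

lemma norm_coords {m : ℕ} (M : Matrix (Fin m) (Fin m) ℝ) (hM : M * Mᵀ = 1)
    (x : Fin m → ℝ) :
    ∑ i, (Mᵀ *ᵥ x) i ^ 2 = x ⬝ᵥ x := by
  have := quad_diag M hM (fun _ => 1) x
  simpa [Matrix.diagonal_one, hM] using this.symm

lemma exists_common {m : ℕ} (f g : Matrix (Fin m) (Fin m) ℝ)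
    (A B : Finset (Fin m)) (hcard : A.card + B.card < m) :
    ∃ x : Fin m → ℝ, x ≠ 0 ∧ (∀ i ∈ A, (f *ᵥ x) i = 0) ∧ (∀ i ∈ B, (g *ᵥ x) i = 0) := by
  classical
  let L : (Fin m → ℝ) →ₗ[ℝ] ({i // i ∈ A} → ℝ) × ({i // i ∈ B} → ℝ) :=
    ((LinearMap.funLeft ℝ ℝ (Subtype.val : {i // i ∈ A} → Fin m)).comp f.mulVecLin).prod
      ((LinearMap.funLeft ℝ ℝ (Subtype.val : {i // i ∈ B} → Fin m)).comp g.mulVecLin)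
  have hnotinj : ¬ Function.Injective L := by
    intro hinj
    have h1 := LinearMap.finrank_le_finrank_of_injective hinj
    simp [Module.finrank_pi, Module.finrank_prod] at h1
    omega
  rw [← LinearMap.ker_eq_bot] at hnotinj
  obtain ⟨x, hx, hx0⟩ := Submodule.exists_mem_ne_zero_of_ne_bot hnotinj
  refine ⟨x, hx0, ?_, ?_⟩
  · intro i hi
    have := congrArg Prod.fst hx
    exact congrFun this ⟨i, hi⟩
  · intro i hi
    have := congrArg Prod.snd hx
    exact congrFun this ⟨i, hi⟩

set_option maxHeartbeats 1000000 in
theorem stmt6 {m : ℕ} (P Rx K : Matrix (Fin m) (Fin m) ℝ)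
    (hP : P.PosDef) (hRx : Rx.PosDef) (ε : ℝ) (hε : 0 < ε)
    (r : ℕ) (hr1 : 1 ≤ r) (hrm : r < m)
    (υ γ δ : Fin m → ℝ)
    (MP NR E : Matrix (Fin m) (Fin m) ℝ)
    (hMP : MP * MPᵀ = 1) (hPeq : P = MP * Matrix.diagonal υ * MPᵀ)
    (hυ : Antitone υ)
    (hNR : NR * NRᵀ = 1) (hRxeq : Rx = NR * Matrix.diagonal γ * NRᵀ)
    (hγ : Antitone γ)
    (hK : K = ε • P⁻¹ - Rx)
    (hE : E * Eᵀ = 1) (hKeq : K = E * Matrix.diagonal δ * Eᵀ)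
    (hδ : Monotone δ)
    (hupper : υ ⟨r - 1, by omega⟩ * γ ⟨m - 1, by omega⟩ > ε)
    (hlower : ε > υ ⟨r, hrm⟩ * γ ⟨0, by omega⟩) :
    δ ⟨r - 1, by omega⟩ < 0 ∧ 0 < δ ⟨r, hrm⟩ ∧
      ∀ s : Fin m, δ s < 0 → (s : ℕ) < r := by
  classical
  have hMP' : MPᵀ * MP = 1 := mul_eq_one_comm.mp hMP
  set i0 : Fin m := ⟨r - 1, by omega⟩ with hi0
  set i1 : Fin m := ⟨r, hrm⟩ with hi1
  set im : Fin m := ⟨m - 1, by omega⟩ with him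
  set z0 : Fin m := ⟨0, by omega⟩ with hz0
  -- positivity of υ
  have hυpos : ∀ i, 0 < υ i := by
    intro i
    set x := MP *ᵥ Pi.single i 1 with hxdef
    have hx : MPᵀ *ᵥ x = Pi.single i 1 := by
      rw [hxdef, Matrix.mulVec_mulVec, hMP', Matrix.one_mulVec]
    have hxne : x ≠ 0 := by
      intro h
      rw [h, Matrix.mulVec_zero] at hx
      simpa using congrFun hx.symm i
    have hq := hP.dotProduct_mulVec_pos hxne
    rw [show star x = x from rfl, hPeq, quad_diag MP hMP υ x, hx] at hq
    simpa [Pi.single_apply, sq, ite_mul, mul_ite] using hq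
  -- inverse of P
  have hdd : Matrix.diagonal υ * Matrix.diagonal (fun i => (υ i)⁻¹) = 1 := by
    rw [Matrix.diagonal_mul_diagonal]
    have : (fun i => υ i * (υ i)⁻¹) = fun _ => (1:ℝ) := by
      funext i; exact mul_inv_cancel₀ (hυpos i).ne'
    rw [this, Matrix.diagonal_one]
  have hPinv : P⁻¹ = MP * Matrix.diagonal (fun i => (υ i)⁻¹) * MPᵀ := by
    apply Matrix.inv_eq_right_inv
    rw [hPeq]
    rw [Matrix.mul_assoc (MP * Matrix.diagonal υ), ← Matrix.mul_assoc MPᵀ,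
      ← Matrix.mul_assoc MPᵀ MP, hMP', Matrix.one_mul,
      ← Matrix.mul_assoc, Matrix.mul_assoc MP, hdd, Matrix.mul_one, hMP]
  -- quadratic form identity
  have hQ : ∀ x : Fin m → ℝ, ∑ i, δ i * (Eᵀ *ᵥ x) i ^ 2
      = ε * ∑ i, (υ i)⁻¹ * (MPᵀ *ᵥ x) i ^ 2 - ∑ i, γ i * (NRᵀ *ᵥ x) i ^ 2 := by
    intro x
    have h1 : x ⬝ᵥ (K *ᵥ x) = ∑ i, δ i * (Eᵀ *ᵥ x) i ^ 2 := by
      rw [hKeq]; exact quad_diag E hE δ x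
    have h2 : x ⬝ᵥ (K *ᵥ x)
        = ε * ∑ i, (υ i)⁻¹ * (MPᵀ *ᵥ x) i ^ 2 - ∑ i, γ i * (NRᵀ *ᵥ x) i ^ 2 := by
      rw [hK, Matrix.sub_mulVec, dotProduct_sub, hRxeq, quad_diag NR hNR γ x,
        Matrix.smul_mulVec, dotProduct_smul, hPinv,
        quad_diag MP hMP (fun i => (υ i)⁻¹) x, smul_eq_mul]
    rw [← h1, h2]
  -- Part 1 : δ i0 < 0
  have part1 : δ i0 < 0 := by
    obtain ⟨x, hxne, hA, hB⟩ := exists_common MPᵀ Eᵀ (Finset.Ici i1) (Finset.Iio i0)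
      (by rw [Fin.card_Ici, Fin.card_Iio]; show m - r + (r - 1) < m; omega)
    have hNpos : 0 < (x ⬝ᵥ x) := by
      rcases lt_or_eq_of_le (Finset.sum_nonneg fun i (_ : i ∈ Finset.univ) =>
        mul_self_nonneg (x i)) with h | h
      · exact h
      · exact absurd (dotProduct_self_eq_zero.mp h.symm) hxne
    have hna : ∑ i, (MPᵀ *ᵥ x) i ^ 2 = (x ⬝ᵥ x) := norm_coords MP hMP x
    have hnb : ∑ i, (Eᵀ *ᵥ x) i ^ 2 = (x ⬝ᵥ x) := norm_coords E hE x
    have hnc : ∑ i, (NRᵀ *ᵥ x) i ^ 2 = (x ⬝ᵥ x) := norm_coords NR hNR x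
    have h1 : δ i0 * (x ⬝ᵥ x) ≤ ∑ i, δ i * (Eᵀ *ᵥ x) i ^ 2 := by
      rw [← hnb, Finset.mul_sum]
      refine Finset.sum_le_sum fun i _ => ?_
      by_cases hcase : (i : ℕ) < r - 1
      · rw [hB i (Finset.mem_Iio.mpr (by exact Fin.mk_lt_mk.mpr hcase))]
        simp
      · exact mul_le_mul_of_nonneg_right (hδ (Fin.mk_le_mk.mpr (by omega))) (sq_nonneg _)
    have h2 : ∑ i, (υ i)⁻¹ * (MPᵀ *ᵥ x) i ^ 2 ≤ (υ i0)⁻¹ * (x ⬝ᵥ x) := by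
      rw [← hna, Finset.mul_sum]
      refine Finset.sum_le_sum fun i _ => ?_
      by_cases hcase : r ≤ (i : ℕ)
      · rw [hA i (Finset.mem_Ici.mpr (Fin.mk_le_mk.mpr hcase))]
        simp
      · refine mul_le_mul_of_nonneg_right ?_ (sq_nonneg _)
        exact inv_anti₀ (hυpos i0) (hυ (Fin.mk_le_mk.mpr (by omega)))
    have h3 : γ im * (x ⬝ᵥ x) ≤ ∑ i, γ i * (NRᵀ *ᵥ x) i ^ 2 := by
      rw [← hnc, Finset.mul_sum]
      refine Finset.sum_le_sum fun i _ => ?_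
      exact mul_le_mul_of_nonneg_right (hγ (Fin.mk_le_mk.mpr (by omega))) (sq_nonneg _)
    have hQx := hQ x
    have hfac : ε * (υ i0)⁻¹ < γ im := by
      rw [← div_eq_mul_inv, div_lt_iff₀ (hυpos i0)]
      calc ε < υ i0 * γ im := hupper
        _ = γ im * υ i0 := mul_comm _ _
    nlinarith [mul_le_mul_of_nonneg_left h2 hε.le]
  -- Part 2 : 0 < δ i1
  have part2 : 0 < δ i1 := by
    obtain ⟨x, hxne, hA, hB⟩ := exists_common MPᵀ Eᵀ (Finset.Iio i1) (Finset.Ioi i1)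
      (by rw [Fin.card_Iio, Fin.card_Ioi]; show r + (m - 1 - r) < m; omega)
    have hNpos : 0 < (x ⬝ᵥ x) := by
      rcases lt_or_eq_of_le (Finset.sum_nonneg fun i (_ : i ∈ Finset.univ) =>
        mul_self_nonneg (x i)) with h | h
      · exact h
      · exact absurd (dotProduct_self_eq_zero.mp h.symm) hxne
    have hna : ∑ i, (MPᵀ *ᵥ x) i ^ 2 = (x ⬝ᵥ x) := norm_coords MP hMP x
    have hnb : ∑ i, (Eᵀ *ᵥ x) i ^ 2 = (x ⬝ᵥ x) := norm_coords E hE x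
    have hnc : ∑ i, (NRᵀ *ᵥ x) i ^ 2 = (x ⬝ᵥ x) := norm_coords NR hNR x
    have h1 : ∑ i, δ i * (Eᵀ *ᵥ x) i ^ 2 ≤ δ i1 * (x ⬝ᵥ x) := by
      rw [← hnb, Finset.mul_sum]
      refine Finset.sum_le_sum fun i _ => ?_
      by_cases hcase : r < (i : ℕ)
      · rw [hB i (Finset.mem_Ioi.mpr (Fin.mk_lt_mk.mpr hcase))]
        simp
      · exact mul_le_mul_of_nonneg_right (hδ (Fin.mk_le_mk.mpr (by omega))) (sq_nonneg _)
    have h2 : (υ i1)⁻¹ * (x ⬝ᵥ x) ≤ ∑ i, (υ i)⁻¹ * (MPᵀ *ᵥ x) i ^ 2 := by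
      rw [← hna, Finset.mul_sum]
      refine Finset.sum_le_sum fun i _ => ?_
      by_cases hcase : (i : ℕ) < r
      · rw [hA i (Finset.mem_Iio.mpr (Fin.mk_lt_mk.mpr hcase))]
        simp
      · refine mul_le_mul_of_nonneg_right ?_ (sq_nonneg _)
        exact inv_anti₀ (hυpos i) (hυ (Fin.mk_le_mk.mpr (by omega)))
    have h3 : ∑ i, γ i * (NRᵀ *ᵥ x) i ^ 2 ≤ γ z0 * (x ⬝ᵥ x) := by
      rw [← hnc, Finset.mul_sum]
      refine Finset.sum_le_sum fun i _ => ?_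
      exact mul_le_mul_of_nonneg_right (hγ (Fin.mk_le_mk.mpr (by omega))) (sq_nonneg _)
    have hQx := hQ x
    have hfac : γ z0 < ε * (υ i1)⁻¹ := by
      rw [← div_eq_mul_inv, lt_div_iff₀ (hυpos i1)]
      calc γ z0 * υ i1 = υ i1 * γ z0 := mul_comm _ _
        _ < ε := hlower
    nlinarith [mul_le_mul_of_nonneg_left h2 hε.le]
  refine ⟨part1, part2, fun s hs => ?_⟩
  by_contra h
  push_neg at h
  have : δ i1 ≤ δ s := hδ (show i1 ≤ s by rw [Fin.le_def]; exact h)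
  linarith
end
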